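/- Let ℓ ≥ 3 be an integer. Suppose (η, a) ∈ U^(1), (ζ, b) ∈ U^(−1), and there is an index i ∈ Fin N with η(i) + ζ(i) = 0. Then Σ_{j ∈ Fin N} (η(j) + ζ(j)) < ℓ·(a + b). (Monomial-level form of the lemma that the trace of the canonical module is contained in each prime p_i: no monomial of the trace of ω can simultaneously vanish at a vertex and have its exponent sum equal to ℓ times its degree.) -/

import Mathlib

/-- `(μ, d)` belongs to `U^(n)` for the cycle of length `2ℓ+1`. -/
def inU (ℓ : ℕ) (n : ℤ) (μ : Fin (2 * ℓ + 1) → ℤ) (d : ℤ) : Prop :=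
  (∀ i, n ≤ μ i) ∧
  (∀ i : Fin (2 * ℓ + 1), μ i + μ (i + 1) ≤ d - n) ∧
  (∑ i, μ i ≤ (ℓ : ℤ) * d - n)

lemma split_pairs (g : ℕ → ℤ) (ℓ : ℕ) :
    ∑ k ∈ Finset.range (2 * ℓ + 1), g k
      = g 0 + ∑ m ∈ Finset.range ℓ, (g (2 * m + 1) + g (2 * m + 2)) := by
  induction ℓ with
  | zero => simp
  | succ n ih =>
    have h : 2 * (n + 1) + 1 = (2 * n + 1) + 1 + 1 := by ring
    rw [h, Finset.sum_range_succ, Finset.sum_range_succ, ih, Finset.sum_range_succ]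
    ring

open Fin.CommRing in
theorem stmt_1 (ℓ : ℕ) (hℓ : 3 ≤ ℓ) (η ζ : Fin (2 * ℓ + 1) → ℤ) (a b : ℤ)
    (hη : inU ℓ 1 η a) (hζ : inU ℓ (-1) ζ b)
    (i : Fin (2 * ℓ + 1)) (hi : η i + ζ i = 0) :
    ∑ j, (η j + ζ j) < (ℓ : ℤ) * (a + b) := by
  obtain ⟨hη1, hη2, hη3⟩ := hη
  obtain ⟨hζ1, hζ2, hζ3⟩ := hζ
  -- η i ≤ 1
  have hηi : η i ≤ 1 := by have := hζ1 i; omega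
  -- rewrite ∑ η as sum over shifted indices
  have hshift : ∑ j, η j = ∑ k ∈ Finset.range (2 * ℓ + 1), η (i + (k : Fin (2 * ℓ + 1))) := by
    rw [← Fin.sum_univ_eq_sum_range (fun k : ℕ => η (i + (k : Fin (2 * ℓ + 1))))]
    simp only [Fin.cast_val_eq_self]
    exact (Equiv.sum_comp (Equiv.addLeft i) η).symm
  -- bound each paired edge
  have hpair : ∀ m ∈ Finset.range ℓ,
      η (i + ((2 * m + 1 : ℕ) : Fin (2 * ℓ + 1))) + η (i + ((2 * m + 2 : ℕ) : Fin (2 * ℓ + 1)))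
        ≤ a - 1 := by
    intro m _
    have hc : ((2 * m + 2 : ℕ) : Fin (2 * ℓ + 1)) = ((2 * m + 1 : ℕ) : Fin (2 * ℓ + 1)) + 1 := by
      push_cast
      ring
    rw [hc, ← add_assoc]
    exact hη2 (i + ((2 * m + 1 : ℕ) : Fin (2 * ℓ + 1)))
  have hsumη : ∑ j, η j ≤ 1 + (ℓ : ℤ) * (a - 1) := by
    rw [hshift, split_pairs]
    have h0 : η (i + ((0 : ℕ) : Fin (2 * ℓ + 1))) = η i := by norm_num
    have hle := Finset.sum_le_sum hpair
    rw [Finset.sum_const, Finset.card_range, nsmul_eq_mul] at hle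
    rw [h0]
    have := hηi
    linarith
  have hsumζ : ∑ j, ζ j ≤ (ℓ : ℤ) * b + 1 := by linarith
  have hℓ' : (3 : ℤ) ≤ (ℓ : ℤ) := by exact_mod_cast hℓ
  rw [Finset.sum_add_distrib]
  nlinarith
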